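/- Let $p>1$ and let $(v,w)$ be a pair of weights with joint constant $[v,w]_{A_p^+}<\infty$ and $\sigma=w^{-1/(p-1)}$. Suppose $a<b<c<d$ with $b=a+\frac{d-a}{3}$ and $c=a+\frac{2}{3}(d-a)$, and suppose $r_\sigma>1$ satisfies the reverse Hölder inequality $\left(\int_c^d \sigma^{r_\sigma}\right)^{1/r_\sigma}\leq 2^{1/r_\sigma}(c-b)^{-(r_\sigma-1)/r_\sigma}\int_b^d\sigma$, and let $r$ satisfy $\frac{p-1}{p/r-1}=r_\sigma$. Then $\int_a^b v\left(\int_c^d \sigma^{r_\sigma}\right)^{(p-1)/r_\sigma}\leq 6^{p-1}(d-a)^{p/r}[v,w]_{A_p^+}$, i.e. the gapped $A_{p/r}^+$ condition holds with constant $6^{p-1}[v,w]_{A_p^+}$. -/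

import Mathlib

open MeasureTheory Real Set

/-- **Gapped `A_{p/r}^+` estimate in the openness lemma.** For `a < b < c < d` with
`b = a + (d-a)/3` and `c = a + 2(d-a)/3`, if `σ = w^{-1/(p-1)}` satisfies the reverse
Hölder inequality with exponent `r_σ = (p-1)/(p/r-1) > 1` on `(b,d)` and `(v,w)` has
joint `A_p^+` constant at most `K`, then
`∫_a^b v (∫_c^d σ^{r_σ})^{(p-1)/r_σ} ≤ 6^{p-1} (d-a)^{p/r} K`. -/
theorem gapped_Apr_estimate
    (p r rσ : ℝ) (hp : 1 < p) (hr1 : 1 < r) (hrp : r < p)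
    (hrσ : (p - 1) / (p / r - 1) = rσ) (hrσ1 : 1 < rσ)
    (v w : ℝ → ℝ) (hv : ∀ x, 0 ≤ v x) (hw : ∀ x, 0 ≤ w x)
    (σ : ℝ → ℝ) (hσ : ∀ x, σ x = (w x) ^ (-(1 / (p - 1))))
    (K : ℝ) (hK : 0 ≤ K)
    (hAp : ∀ a b c : ℝ, a < b → b < c →
      (1 / (c - a) * ∫ x in a..b, v x) *
        (1 / (c - a) * ∫ x in b..c, σ x) ^ (p - 1) ≤ K)
    (a b c d : ℝ) (hab : a < b) (hbc : b < c) (hcd : c < d)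
    (hb : b = a + (d - a) / 3) (hc : c = a + 2 / 3 * (d - a))
    (hRH : (∫ x in c..d, (σ x) ^ rσ) ^ (1 / rσ) ≤
      2 ^ (1 / rσ) * (c - b) ^ (-((rσ - 1) / rσ)) * ∫ x in b..d, σ x) :
    (∫ x in a..b, v x) * (∫ x in c..d, (σ x) ^ rσ) ^ ((p - 1) / rσ) ≤
      6 ^ (p - 1) * (d - a) ^ (p / r) * K := by
  have hL : 0 < d - a := by linarith
  have hcb : c - b = (d - a) / 3 := by rw [hb, hc]; ring
  have hσ0 : ∀ x, 0 ≤ σ x := fun x => by rw [hσ x]; exact Real.rpow_nonneg (hw x) _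
  have hV : 0 ≤ ∫ x in a..b, v x :=
    intervalIntegral.integral_nonneg hab.le (fun x _ => hv x)
  have hS : 0 ≤ ∫ x in b..d, σ x :=
    intervalIntegral.integral_nonneg (by linarith) (fun x _ => hσ0 x)
  have hI : 0 ≤ ∫ x in c..d, (σ x) ^ rσ :=
    intervalIntegral.integral_nonneg hcd.le (fun x _ => Real.rpow_nonneg (hσ0 x) _)
  set V := ∫ x in a..b, v x with hVdef
  set S := ∫ x in b..d, σ x with hSdef
  set I := ∫ x in c..d, (σ x) ^ rσ with hIdef
  have hp1 : (0:ℝ) < p - 1 := by linarith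
  have hr0 : (0:ℝ) < r := by linarith
  have hpr1 : (0:ℝ) < p / r - 1 := by
    have : 1 < p / r := (one_lt_div hr0).2 hrp
    linarith
  have hrσ0 : (0:ℝ) < rσ := lt_trans one_pos hrσ1
  have hα : (p - 1) / rσ = p / r - 1 := by
    rw [← hrσ]
    field_simp
  have hβ : (rσ - 1) / rσ * (p - 1) = p - p / r := by
    have h1 : (rσ - 1) / rσ * (p - 1) = (p - 1) - (p - 1) / rσ := by
      field_simp
    rw [h1, hα]; ring
  -- A_p^+ at (a, b, d)
  have hApd := hAp a b d hab (hbc.trans hcd)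
  have hVS : V * S ^ (p - 1) ≤ K * (d - a) ^ p := by
    have hinv : (0:ℝ) < 1 / (d - a) := by positivity
    have h2 : (1 / (d - a) * S) ^ (p - 1) = (1 / (d - a)) ^ (p - 1) * S ^ (p - 1) :=
      Real.mul_rpow hinv.le hS
    rw [h2] at hApd
    have h3 : (1 / (d - a)) * (1 / (d - a)) ^ (p - 1) = (1 / (d - a)) ^ p := by
      nth_rewrite 1 [← Real.rpow_one (1 / (d - a))]
      rw [← Real.rpow_add hinv]; ring_nf
    have h4 : (1 / (d - a)) ^ p = ((d - a) ^ p)⁻¹ := by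
      rw [one_div, ← Real.inv_rpow hL.le]
    have h5 : V * S ^ (p - 1) * ((d - a) ^ p)⁻¹ ≤ K := by
      calc V * S ^ (p - 1) * ((d - a) ^ p)⁻¹
          = (1 / (d - a) * V) * ((1 / (d - a)) ^ (p - 1) * S ^ (p - 1)) := by
            rw [← h4, ← h3]; ring
        _ ≤ K := hApd
    have hLp : (0:ℝ) < (d - a) ^ p := Real.rpow_pos_of_pos hL p
    calc V * S ^ (p - 1) = V * S ^ (p - 1) * ((d - a) ^ p)⁻¹ * (d - a) ^ p := by
          field_simp
      _ ≤ K * (d - a) ^ p := by gcongr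
  -- raise RH to power p - 1
  have hRH2 : I ^ ((p - 1) / rσ) ≤
      2 ^ (p / r - 1) * ((d - a) / 3) ^ (-(p - p / r)) * S ^ (p - 1) := by
    have h0 : (0:ℝ) ≤ I ^ (1 / rσ) := Real.rpow_nonneg hI _
    have hcbpos : (0:ℝ) < c - b := by linarith
    have h1 := Real.rpow_le_rpow h0 hRH hp1.le
    have hA : (0:ℝ) ≤ (2:ℝ) ^ (1 / rσ) := by positivity
    have hB : (0:ℝ) ≤ (c - b) ^ (-((rσ - 1) / rσ)) := Real.rpow_nonneg hcbpos.le _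
    rw [← Real.rpow_mul hI, Real.mul_rpow (mul_nonneg hA hB) hS,
      Real.mul_rpow hA hB, ← Real.rpow_mul (by norm_num : (0:ℝ) ≤ 2),
      ← Real.rpow_mul hcbpos.le] at h1
    have e1 : 1 / rσ * (p - 1) = (p - 1) / rσ := by ring
    have e2 : -((rσ - 1) / rσ) * (p - 1) = -(p - p / r) := by
      rw [neg_mul, hβ]
    rw [e1, e2, hcb, hα] at h1
    rw [hα]
    exact h1
  -- combine
  have hconst : (2:ℝ) ^ (p / r - 1) * 3 ^ (p - p / r) ≤ 6 ^ (p - 1) := by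
    have h6 : (6:ℝ) ^ (p - 1) = 2 ^ (p - 1) * 3 ^ (p - 1) := by
      rw [← Real.mul_rpow (by norm_num) (by norm_num)]; norm_num
    rw [h6]
    have hprlt : p / r < p := by
      rw [div_lt_iff₀ hr0]
      nlinarith
    have hpr2 : 1 < p / r := (one_lt_div hr0).2 hrp
    have ha : (2:ℝ) ^ (p / r - 1) ≤ 2 ^ (p - 1) :=
      Real.rpow_le_rpow_of_exponent_le (by norm_num) (by linarith)
    have hb' : (3:ℝ) ^ (p - p / r) ≤ 3 ^ (p - 1) :=
      Real.rpow_le_rpow_of_exponent_le (by norm_num) (by linarith)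
    have : (0:ℝ) ≤ (3:ℝ) ^ (p - p / r) := by positivity
    nlinarith [Real.rpow_nonneg (by norm_num : (0:ℝ) ≤ 2) (p - 1)]
  have hfactor : (0:ℝ) ≤ 2 ^ (p / r - 1) * ((d - a) / 3) ^ (-(p - p / r)) := by positivity
  calc V * I ^ ((p - 1) / rσ)
      ≤ V * (2 ^ (p / r - 1) * ((d - a) / 3) ^ (-(p - p / r)) * S ^ (p - 1)) := by
        exact mul_le_mul_of_nonneg_left hRH2 hV
    _ = 2 ^ (p / r - 1) * ((d - a) / 3) ^ (-(p - p / r)) * (V * S ^ (p - 1)) := by ring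
    _ ≤ 2 ^ (p / r - 1) * ((d - a) / 3) ^ (-(p - p / r)) * (K * (d - a) ^ p) :=
        mul_le_mul_of_nonneg_left hVS hfactor
    _ = 2 ^ (p / r - 1) * 3 ^ (p - p / r) * (d - a) ^ (p / r) * K := by
        have key : ((d - a) / 3) ^ (-(p - p / r)) * (d - a) ^ p
            = 3 ^ (p - p / r) * (d - a) ^ (p / r) := by
          rw [Real.rpow_neg (by positivity),
            Real.div_rpow hL.le (by norm_num : (0:ℝ) ≤ 3)]
          have hsplit : (d - a) ^ p = (d - a) ^ (p - p / r) * (d - a) ^ (p / r) := by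
            rw [← Real.rpow_add hL]; congr 1; ring
          rw [hsplit]
          have h1' : ((d - a) : ℝ) ^ (p - p / r) ≠ 0 := by positivity
          have h2' : ((3:ℝ)) ^ (p - p / r) ≠ 0 := by positivity
          field_simp
        calc 2 ^ (p / r - 1) * ((d - a) / 3) ^ (-(p - p / r)) * (K * (d - a) ^ p)
            = 2 ^ (p / r - 1) * (((d - a) / 3) ^ (-(p - p / r)) * (d - a) ^ p) * K := by
              ring
          _ = 2 ^ (p / r - 1) * (3 ^ (p - p / r) * (d - a) ^ (p / r)) * K := by rw [key]
          _ = 2 ^ (p / r - 1) * 3 ^ (p - p / r) * (d - a) ^ (p / r) * K := by ring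
    _ ≤ 6 ^ (p - 1) * (d - a) ^ (p / r) * K := by
        have : (0:ℝ) ≤ (d - a) ^ (p / r) := by positivity
        have hh : 2 ^ (p / r - 1) * 3 ^ (p - p / r) * (d - a) ^ (p / r) ≤
            6 ^ (p - 1) * (d - a) ^ (p / r) :=
          mul_le_mul_of_nonneg_right hconst this
        exact mul_le_mul_of_nonneg_right hh hK
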